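/- arXiv:math/0408403 — 2 statements merged into one kernel-verified Lean document; each statement's English description precedes it below -/
import Mathlib

section
/- Let G be a topological group acting continuously on topological spaces E and F, and suppose the action of G on E is principal, i.e. it is free and the map G × E → E × E, (g,e) ↦ (g·e, e), is a homeomorphism onto the fiber product E ×_{E/G} E = {(e₁,e₂) ∈ E × E : q(e₁) = q(e₂)} with the subspace topology. Then for every continuous section s : E/G → E ×_G F of the projection p : E ×_G F → E/G (p ∘ s = id), there exists a unique continuous G-equivariant map ŝ : E → F such that s(q(e)) = [e, ŝ(e)] for all e ∈ E. -/
set_option linter.unusedSectionVars false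

variable (G E F : Type) [Group G] [TopologicalSpace G] [IsTopologicalGroup G]
  [TopologicalSpace E] [MulAction G E] [ContinuousSMul G E]
  [TopologicalSpace F] [MulAction G F] [ContinuousSMul G F]

/-- The orbit space `E/G`, with the quotient topology. -/
abbrev OrbitSpace := Quotient (MulAction.orbitRel G E)

/-- The Borel construction `E ×_G F`: the quotient of `E × F` by the diagonal
`G`-action, with the quotient topology. -/
abbrev BorelConstruction := Quotient (MulAction.orbitRel G (E × F))

/-- The projection `p : E ×_G F → E/G`, `p [e, x] = q e`. -/
def borelProj : BorelConstruction G E F → OrbitSpace G E :=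
  Quotient.lift (fun z => Quotient.mk (MulAction.orbitRel G E) z.1) (by
    intro a b hab
    obtain ⟨g, hg⟩ := MulAction.orbitRel_apply.mp hab
    exact Quotient.sound (MulAction.orbitRel_apply.mpr ⟨g, congrArg Prod.fst hg⟩))

/-- The fiber product `E ×_{E/G} E = {(e₁, e₂) | q e₁ = q e₂}`, with the subspace topology. -/
abbrev FiberProd := {z : E × E // Quotient.mk (MulAction.orbitRel G E) z.1 =
  Quotient.mk (MulAction.orbitRel G E) z.2}

/-- The translation map `G × E → E ×_{E/G} E`, `(g, e) ↦ (g • e, e)`. -/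
def translationMap : G × E → FiberProd G E := fun ge =>
  ⟨(ge.1 • ge.2, ge.2), Quotient.sound (MulAction.orbitRel_apply.mpr (MulAction.mem_orbit _ _))⟩

-- AUX
noncomputable def tauMap (H : G × E ≃ₜ FiberProd G E) : FiberProd G E → G :=
  fun z => (H.symm z).1

theorem tauMap_eq (H : G × E ≃ₜ FiberProd G E) (hH : ⇑H = translationMap G E)
    (z : FiberProd G E) (g : G) (hg : g • z.1.2 = z.1.1) : tauMap G E H z = g := by
  have h : H (g, z.1.2) = z := by
    rw [hH]
    apply Subtype.ext
    show (g • z.1.2, z.1.2) = z.1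
    rw [hg]
  have h2 : H.symm z = (g, z.1.2) := by
    conv_lhs => rw [← h]
    exact H.symm_apply_apply _
  simp [tauMap, h2]

theorem tauMap_spec (H : G × E ≃ₜ FiberProd G E) (hH : ⇑H = translationMap G E)
    (z : FiberProd G E) : tauMap G E H z • z.1.2 = z.1.1 := by
  have h := H.apply_symm_apply z
  rw [hH] at h
  have h1 := congrArg (fun w => (w : FiberProd G E).1) h
  have hfst := congrArg Prod.fst h1
  have hsnd := congrArg Prod.snd h1
  simp only [translationMap] at hfst hsnd
  rw [tauMap, ← hsnd] at *
  exact hfst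

theorem continuous_tauMap (H : G × E ≃ₜ FiberProd G E) : Continuous (tauMap G E H) :=
  continuous_fst.comp H.continuous_invFun
/-- Domain of the descent: pairs `(e, (e', x))` with `q e = q e'`. -/
abbrev SecDom := {d : E × (E × F) // Quotient.mk (MulAction.orbitRel G E) d.1 =
  Quotient.mk (MulAction.orbitRel G E) d.2.1}

/-- Target of the descent: pairs `(e, w)` with `p w = q e`. -/
abbrev SecQuot := {w : E × BorelConstruction G E F //
  borelProj G E F w.2 = Quotient.mk (MulAction.orbitRel G E) w.1}

noncomputable def nFun (H : G × E ≃ₜ FiberProd G E) : SecDom G E F → F :=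
  fun d => tauMap G E H ⟨(d.1.1, d.1.2.1), d.2⟩ • d.1.2.2

theorem continuous_nFun (H : G × E ≃ₜ FiberProd G E) : Continuous (nFun G E F H) := by
  apply Continuous.smul
  · exact (continuous_tauMap G E H).comp (Continuous.subtype_mk
      ((continuous_fst.comp continuous_subtype_val).prodMk
        (continuous_fst.comp (continuous_snd.comp continuous_subtype_val))) _)
  · exact continuous_snd.comp (continuous_snd.comp continuous_subtype_val)

theorem nFun_congr (H : G × E ≃ₜ FiberProd G E) (hH : ⇑H = translationMap G E)
    (e₀ : E) (z w : E × F) (g : G) (hg : g • z = w)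
    (hz : Quotient.mk (MulAction.orbitRel G E) e₀ = Quotient.mk (MulAction.orbitRel G E) z.1)
    (hw : Quotient.mk (MulAction.orbitRel G E) e₀ = Quotient.mk (MulAction.orbitRel G E) w.1) :
    nFun G E F H ⟨(e₀, w), hw⟩ = nFun G E F H ⟨(e₀, z), hz⟩ := by
  have hw1 : w.1 = g • z.1 := by rw [← hg]; rfl
  have hw2 : w.2 = g • z.2 := by rw [← hg]; rfl
  have hτ : tauMap G E H ⟨(e₀, z.1), hz⟩ • z.1 = e₀ := tauMap_spec G E H hH ⟨(e₀, z.1), hz⟩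
  have hkey : tauMap G E H ⟨(e₀, w.1), hw⟩ = tauMap G E H ⟨(e₀, z.1), hz⟩ * g⁻¹ := by
    apply tauMap_eq G E H hH
    show (tauMap G E H ⟨(e₀, z.1), hz⟩ * g⁻¹) • w.1 = e₀
    rw [hw1, smul_smul, inv_mul_cancel_right]
    exact hτ
  show tauMap G E H ⟨(e₀, w.1), hw⟩ • w.2 = tauMap G E H ⟨(e₀, z.1), hz⟩ • z.2
  rw [hkey, hw2, smul_smul, inv_mul_cancel_right]

def secPi : SecDom G E F → SecQuot G E F :=
  fun d => ⟨(d.1.1, Quotient.mk (MulAction.orbitRel G (E × F)) d.1.2), d.2.symm⟩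

theorem continuous_secPi : Continuous (secPi G E F) :=
  Continuous.subtype_mk ((continuous_fst.comp continuous_subtype_val).prodMk
    (continuous_quot_mk.comp (continuous_snd.comp continuous_subtype_val))) _

theorem surjective_secPi : Function.Surjective (secPi G E F) := by
  intro w
  refine ⟨⟨(w.1.1, w.1.2.out), ?_⟩, ?_⟩
  · rw [← w.2]
    conv_lhs => rw [← Quotient.out_eq w.1.2]
    rfl
  · apply Subtype.ext
    show (w.1.1, Quotient.mk _ w.1.2.out) = w.1
    rw [Quotient.out_eq]

theorem isOpenMap_secPi : IsOpenMap (secPi G E F) := by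
  intro W hW
  obtain ⟨O, hO, rfl⟩ := isOpen_induced_iff.mp hW
  have hOpen : IsOpen ((Prod.map id (Quotient.mk (MulAction.orbitRel G (E × F)))) '' O) :=
    (IsOpenMap.id.prodMap MulAction.isOpenQuotientMap_quotientMk.isOpenMap) O hO
  have himg : secPi G E F '' (Subtype.val ⁻¹' O) =
      Subtype.val ⁻¹' ((Prod.map id (Quotient.mk (MulAction.orbitRel G (E × F)))) '' O) := by
    ext p
    constructor
    · rintro ⟨d, hd, rfl⟩
      exact ⟨d.1, hd, rfl⟩
    · rintro ⟨a, ha, hap⟩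
      have h1 : a.1 = p.1.1 := congrArg Prod.fst hap
      have h2 : Quotient.mk (MulAction.orbitRel G (E × F)) a.2 = p.1.2 :=
        congrArg Prod.snd hap
      have hcond : Quotient.mk (MulAction.orbitRel G E) a.1 =
          Quotient.mk (MulAction.orbitRel G E) a.2.1 := by
        rw [h1, ← p.2, ← h2]
        rfl
      exact ⟨⟨a, hcond⟩, ha, Subtype.ext hap⟩
  rw [himg]
  exact hOpen.preimage continuous_subtype_val

theorem isQuotientMap_secPi : Topology.IsQuotientMap (secPi G E F) :=
  (isOpenMap_secPi G E F).isQuotientMap (continuous_secPi G E F) (surjective_secPi G E F)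

noncomputable def nBar (H : G × E ≃ₜ FiberProd G E) : SecQuot G E F → F :=
  fun p => nFun G E F H ⟨(p.1.1, p.1.2.out), by
    rw [← p.2]
    conv_lhs => rw [← Quotient.out_eq p.1.2]
    rfl⟩

theorem nBar_comp (H : G × E ≃ₜ FiberProd G E) (hH : ⇑H = translationMap G E)
    (d : SecDom G E F) : nBar G E F H (secPi G E F d) = nFun G E F H d := by
  obtain ⟨g, hg⟩ := MulAction.orbitRel_apply.mp
    (Quotient.mk_out (s := MulAction.orbitRel G (E × F)) d.1.2)
  exact nFun_congr G E F H hH d.1.1 d.1.2 _ g hg d.2 _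

theorem continuous_nBar (H : G × E ≃ₜ FiberProd G E) (hH : ⇑H = translationMap G E) :
    Continuous (nBar G E F H) := by
  rw [(isQuotientMap_secPi G E F).continuous_iff]
  have : nBar G E F H ∘ secPi G E F = nFun G E F H := funext (nBar_comp G E F H hH)
  rw [this]
  exact continuous_nFun G E F H

/-- If the action of `G` on `E` is principal (free, and the translation map
is a homeomorphism onto the fiber product), then every continuous section `s` of the projection
`p : E ×_G F → E/G` comes from a unique continuous `G`-equivariant map `ŝ : E → F`
via `s (q e) = [e, ŝ e]`. -/
theorem equivariant_map_of_section
    (hfree : ∀ (g : G) (e : E), g • e = e → g = 1)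
    (hprinc : IsHomeomorph (translationMap G E))
    (s : C(OrbitSpace G E, BorelConstruction G E F))
    (hsec : ∀ z : OrbitSpace G E, borelProj G E F (s z) = z) :
    ∃! sHat : C(E, F),
      (∀ (g : G) (e : E), sHat (g • e) = g • sHat e) ∧
      (∀ e : E, s (Quotient.mk (MulAction.orbitRel G E) e) =
        Quotient.mk (MulAction.orbitRel G (E × F)) (e, sHat e)) := by
  obtain ⟨H, hH⟩ : ∃ H : G × E ≃ₜ FiberProd G E, ⇑H = translationMap G E :=
    ⟨IsHomeomorph.homeomorph (translationMap G E) hprinc, rfl⟩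
  let sHat : E → F := fun e =>
    nBar G E F H ⟨(e, s (Quotient.mk (MulAction.orbitRel G E) e)), hsec _⟩
  have hcont : Continuous sHat :=
    (continuous_nBar G E F H hH).comp (Continuous.subtype_mk
      (continuous_id.prodMk (s.continuous.comp continuous_quot_mk)) _)
  have hprop : ∀ e : E, s (Quotient.mk (MulAction.orbitRel G E) e) =
      Quotient.mk (MulAction.orbitRel G (E × F)) (e, sHat e) := by
    intro e
    set z := s (Quotient.mk (MulAction.orbitRel G E) e) with hz
    have h1 : borelProj G E F z = Quotient.mk (MulAction.orbitRel G E) e := hsec _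
    have hpf : Quotient.mk (MulAction.orbitRel G E) e =
        Quotient.mk (MulAction.orbitRel G E) z.out.1 := by
      rw [← h1]
      conv_lhs => rw [← Quotient.out_eq z]
      rfl
    have hs1 : sHat e = tauMap G E H ⟨(e, z.out.1), hpf⟩ • z.out.2 := rfl
    set τ := tauMap G E H ⟨(e, z.out.1), hpf⟩ with hτdef
    have hτ : τ • z.out.1 = e := tauMap_spec G E H hH _
    have hpair : τ • z.out = (e, sHat e) := by
      rw [hs1]
      show (τ • z.out.1, τ • z.out.2) = _
      rw [hτ]
    rw [← hpair]
    exact ((Quotient.sound (MulAction.orbitRel_apply.mpr ⟨τ, rfl⟩)).trans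
      (Quotient.out_eq z)).symm
  have hequiv : ∀ (g : G) (e : E), sHat (g • e) = g • sHat e := by
    intro g e
    have h1 : Quotient.mk (MulAction.orbitRel G E) (g • e) =
        Quotient.mk (MulAction.orbitRel G E) e :=
      Quotient.sound (MulAction.orbitRel_apply.mpr (MulAction.mem_orbit e g))
    have h2 : Quotient.mk (MulAction.orbitRel G (E × F)) (g • e, sHat (g • e)) =
        Quotient.mk (MulAction.orbitRel G (E × F)) (g • e, g • sHat e) := by
      rw [← hprop (g • e), h1, hprop e]
      have : (g • e, g • sHat e) = g • (e, sHat e) := rfl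
      rw [this]
      exact (Quotient.sound (MulAction.orbitRel_apply.mpr ⟨g, rfl⟩)).symm
    obtain ⟨k, hk⟩ := MulAction.orbitRel_apply.mp (Quotient.exact h2)
    have hk1 : k • (g • e) = g • e := by
      have := congrArg Prod.fst hk
      simpa using this
    have hk2 : k • (g • sHat e) = sHat (g • e) := by
      have := congrArg Prod.snd hk
      simpa using this
    rw [hfree k (g • e) hk1, one_smul] at hk2
    exact hk2.symm
  refine ⟨⟨sHat, hcont⟩, ⟨hequiv, hprop⟩, ?_⟩
  rintro t ⟨ht1, ht2⟩
  ext e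
  have h3 : Quotient.mk (MulAction.orbitRel G (E × F)) (e, t e) =
      Quotient.mk (MulAction.orbitRel G (E × F)) (e, sHat e) :=
    (ht2 e).symm.trans (hprop e)
  obtain ⟨k, hk⟩ := MulAction.orbitRel_apply.mp (Quotient.exact h3)
  have hk1 : k • e = e := by
    have := congrArg Prod.fst hk
    simpa using this
  have hk2 : k • sHat e = t e := by
    have := congrArg Prod.snd hk
    simpa using this
  rw [hfree k e hk1, one_smul] at hk2
  exact hk2.symm
end

section
/- Let F be a Hausdorff topological space, h : F → F a homeomorphism, and x ∈ F a periodic point of least period n ≥ 1, i.e. hⁿ(x) = x and the points x, h(x), …, h^{n−1}(x) are pairwise distinct. Let S ⊆ T_h be the image under the quotient map F × ℝ → T_h of the set {x, h(x), …, h^{n−1}(x)} × ℝ, with the subspace topology. Then the restriction p|_S : S → ℝ/ℤ of the mapping-torus projection is a covering map each of whose fibers has exactly n elements (an n-fold covering of the circle). -/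
variable {F : Type} [TopologicalSpace F]

/-- The group of self-homeomorphisms of `F`, with `(a * b) x = a (b x)`. -/
instance : Group (F ≃ₜ F) where
  mul a b := b.trans a
  one := Homeomorph.refl F
  inv := Homeomorph.symm
  mul_assoc _ _ _ := rfl
  one_mul _ := rfl
  mul_one _ := rfl
  inv_mul_cancel a := Homeomorph.ext fun x => a.symm_apply_apply x

/-- The `ℤ`-action on `F × ℝ`: `n • (x, t) = (hⁿ x, t + n)`. -/
def torusAct (h : F ≃ₜ F) (n : ℤ) (p : F × ℝ) : F × ℝ :=
  ((h ^ n) p.1, p.2 + n)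

lemma torusAct_zero (h : F ≃ₜ F) (p : F × ℝ) : torusAct h 0 p = p := by
  unfold torusAct
  rw [zpow_zero]
  exact Prod.ext rfl (by push_cast; ring)

lemma torusAct_add (h : F ≃ₜ F) (m n : ℤ) (p : F × ℝ) :
    torusAct h (m + n) p = torusAct h m (torusAct h n p) := by
  unfold torusAct
  rw [zpow_add]
  exact Prod.ext rfl (by push_cast; ring)

/-- The equivalence relation on `F × ℝ` generated by the `ℤ`-action. -/
def torusSetoid (h : F ≃ₜ F) : Setoid (F × ℝ) where
  r p q := ∃ n : ℤ, torusAct h n p = q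
  iseqv := by
    constructor
    · exact fun p => ⟨0, torusAct_zero h p⟩
    · rintro p q ⟨n, rfl⟩
      exact ⟨-n, by rw [← torusAct_add, neg_add_cancel, torusAct_zero]⟩
    · rintro p q r ⟨m, rfl⟩ ⟨n, rfl⟩
      exact ⟨n + m, by rw [torusAct_add]⟩

/-- The mapping torus of `h : F ≃ₜ F`, as the quotient of `F × ℝ` by the `ℤ`-action. -/
def MappingTorus (h : F ≃ₜ F) : Type := Quotient (torusSetoid h)

instance (h : F ≃ₜ F) : TopologicalSpace (MappingTorus h) :=
  instTopologicalSpaceQuotient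

/-- The projection `p : T_h → ℝ/ℤ` induced by `(x, t) ↦ t`. -/
noncomputable def torusProj (h : F ≃ₜ F) : MappingTorus h → AddCircle (1 : ℝ) :=
  Quotient.lift (fun p : F × ℝ => ((p.2 : ℝ) : AddCircle (1 : ℝ))) (by
    rintro a b ⟨n, rfl⟩
    show (a.2 : AddCircle (1 : ℝ)) = ((a.2 + (n : ℝ) : ℝ) : AddCircle (1 : ℝ))
    refine (QuotientAddGroup.eq).mpr ?_
    refine AddSubgroup.mem_zmultiples_iff.mpr ⟨n, ?_⟩
    rw [zsmul_eq_mul, mul_one, neg_add_cancel_left])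

open Set Function AddCircle

namespace MTAux

lemma coe_int_addCircle (k : ℤ) : ((k : ℝ) : AddCircle (1:ℝ)) = 0 :=
  (AddCircle.coe_eq_zero_iff (1:ℝ)).mpr ⟨k, by simp⟩

lemma coe_add_int (s : ℝ) (k : ℤ) :
    ((s + k : ℝ) : AddCircle (1:ℝ)) = (s : AddCircle (1:ℝ)) := by
  rw [AddCircle.coe_add, coe_int_addCircle, add_zero]

variable (n : ℕ)

/-- The natural projection `ℝ/nℤ → ℝ/ℤ`. -/
noncomputable def psi : AddCircle (n:ℝ) → AddCircle (1:ℝ) := fun z =>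
  Quotient.liftOn' z (fun t => (t : AddCircle (1:ℝ))) (by
    intro s t hst
    obtain ⟨m, hm⟩ := QuotientAddGroup.leftRel_apply.mp hst
    show (s : AddCircle (1:ℝ)) = (t : AddCircle (1:ℝ))
    have hm' : (m:ℝ) * n = -s + t := by simpa [zsmul_eq_mul] using hm
    have ht : t = s + ((m * n : ℤ) : ℝ) := by push_cast; linarith
    rw [ht, coe_add_int])

@[simp] lemma psi_coe (t : ℝ) : psi n ((t : ℝ) : AddCircle (n:ℝ)) = (t : AddCircle (1:ℝ)) := rfl

lemma continuous_psi : Continuous (psi n) :=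
  Continuous.quotient_liftOn' (AddCircle.continuous_mk' (1:ℝ)) _

variable {n}

lemma fact_pos (hn : 0 < n) : Fact (0 < (n:ℝ)) := ⟨by exact_mod_cast hn⟩

lemma coe_equivIco_symm {p : ℝ} [Fact (0 < p)] (a : ℝ) (z : AddCircle p) :
    (((equivIco p a z : ℝ)) : AddCircle p) = z :=
  (equivIco p a).symm_apply_apply z

lemma equivIco_coe_of_mem {p a s : ℝ} [hp : Fact (0 < p)] (hs : s ∈ Ico a (a + p)) :
    ((equivIco p a ((s : ℝ) : AddCircle p) : ℝ)) = s := by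
  change ((QuotientAddGroup.equivIcoMod hp.out a ↑s : ℝ)) = s
  rw [QuotientAddGroup.equivIcoMod_coe]
  exact (toIcoMod_eq_self hp.out).mpr hs

/-- The "sheet number" of a point of `ℝ/nℤ` relative to the base point `a`. -/
noncomputable def sheet (hn : 0 < n) (a : ℝ) (z : AddCircle (n:ℝ)) : Fin n :=
  haveI := fact_pos hn
  ⟨(⌊(equivIco (n:ℝ) a z : ℝ) - a⌋).toNat, by
    haveI := fact_pos hn
    have h2 := (equivIco (n:ℝ) a z).2.2
    have hlt : ⌊(equivIco (n:ℝ) a z : ℝ) - a⌋ < (n:ℤ) := by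
      rw [Int.floor_lt]; push_cast; linarith
    omega⟩

lemma sheet_val (hn : 0 < n) (a : ℝ) (z : AddCircle (n:ℝ)) :
    haveI := fact_pos hn
    ((sheet hn a z : ℕ) : ℤ) = ⌊(equivIco (n:ℝ) a z : ℝ) - a⌋ := by
  haveI := fact_pos hn
  simp only [sheet]
  exact Int.toNat_of_nonneg (Int.floor_nonneg.mpr
    (by linarith [(equivIco (n:ℝ) a z).2.1]))

lemma psi_rep (hn : 0 < n) (a : ℝ) (z : AddCircle (n:ℝ)) :
    haveI := fact_pos hn
    psi n z = (((equivIco (n:ℝ) a z : ℝ)) : AddCircle (1:ℝ)) := by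
  haveI := fact_pos hn
  conv_lhs => rw [← coe_equivIco_symm a z]
  exact psi_coe n _

/-- The local trivialization of `psi n` over the complement of the point `a`. -/
noncomputable def psiTriv (hn : 0 < n) (a : ℝ) : Bundle.Trivialization (Fin n) (psi n) :=
  haveI := fact_pos (hn := hn)
  { toFun := fun z => (psi n z, sheet hn a z)
    invFun := fun q => (((equivIco (1:ℝ) a q.1 : ℝ) + ((q.2 : ℕ) : ℝ) : ℝ) : AddCircle (n:ℝ))
    source := psi n ⁻¹' {((a:ℝ) : AddCircle (1:ℝ))}ᶜ
    target := {((a:ℝ) : AddCircle (1:ℝ))}ᶜ ×ˢ univ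
    map_source' := fun z hz => ⟨hz, mem_univ _⟩
    map_target' := by
      rintro ⟨u, k⟩ ⟨hu, -⟩
      have key : psi n (((equivIco (1:ℝ) a u : ℝ) + ((k:ℕ):ℝ) : ℝ) : AddCircle (n:ℝ)) = u := by
        rw [psi_coe]
        have h1 : (((k:ℕ):ℝ)) = (((k:ℕ):ℤ) : ℝ) := by push_cast; ring
        rw [h1, coe_add_int, coe_equivIco_symm]
      simp only [mem_preimage, mem_compl_iff, mem_singleton_iff, key]
      simpa using hu
    left_inv' := by
      intro z hz
      haveI := fact_pos (hn := hn)
      have hsmem : (equivIco (n:ℝ) a z : ℝ) ∈ Ico a (a + (n:ℝ)) := (equivIco (n:ℝ) a z).2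
      have hk0 : (0:ℤ) ≤ ⌊(equivIco (n:ℝ) a z : ℝ) - a⌋ :=
        Int.floor_nonneg.mpr (by linarith [hsmem.1])
      have hmem1 : (equivIco (n:ℝ) a z : ℝ) - (⌊(equivIco (n:ℝ) a z : ℝ) - a⌋ : ℝ)
          ∈ Ico a (a + 1) := by
        constructor
        · have := Int.floor_le ((equivIco (n:ℝ) a z : ℝ) - a); linarith
        · have := Int.lt_floor_add_one ((equivIco (n:ℝ) a z : ℝ) - a); linarith
      have hco : (((equivIco (n:ℝ) a z : ℝ) - (⌊(equivIco (n:ℝ) a z : ℝ) - a⌋:ℝ) : ℝ)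
          : AddCircle (1:ℝ)) = psi n z := by
        rw [psi_rep hn a z, ← coe_add_int ((equivIco (n:ℝ) a z : ℝ)
          - (⌊(equivIco (n:ℝ) a z : ℝ) - a⌋:ℝ)) ⌊(equivIco (n:ℝ) a z : ℝ) - a⌋]
        norm_num
      have hA : ((equivIco (1:ℝ) a (psi n z) : ℝ))
          = (equivIco (n:ℝ) a z : ℝ) - (⌊(equivIco (n:ℝ) a z : ℝ) - a⌋ : ℝ) := by
        rw [← hco]; exact equivIco_coe_of_mem hmem1
      show ((((equivIco (1:ℝ) a (psi n z) : ℝ)) + ((sheet hn a z : ℕ):ℝ) : ℝ)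
          : AddCircle (n:ℝ)) = z
      have hkc : (((sheet hn a z : ℕ):ℝ)) = ((⌊(equivIco (n:ℝ) a z : ℝ) - a⌋ : ℤ) : ℝ) := by
        exact_mod_cast congrArg (fun m : ℤ => (m:ℝ)) (sheet_val hn a z)
      rw [hA, hkc]
      have heq : (equivIco (n:ℝ) a z : ℝ) - (⌊(equivIco (n:ℝ) a z : ℝ) - a⌋:ℝ)
          + (⌊(equivIco (n:ℝ) a z : ℝ) - a⌋:ℝ) = (equivIco (n:ℝ) a z : ℝ) := by ring
      rw [heq, coe_equivIco_symm]
    right_inv' := by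
      rintro ⟨u, k⟩ ⟨hu, -⟩
      haveI := fact_pos (hn := hn)
      have hcmem : (equivIco (1:ℝ) a u : ℝ) ∈ Ico a (a + 1) := (equivIco (1:ℝ) a u).2
      have hck : (equivIco (1:ℝ) a u : ℝ) + ((k:ℕ):ℝ) ∈ Ico a (a + (n:ℝ)) := by
        constructor
        · have : (0:ℝ) ≤ ((k:ℕ):ℝ) := by positivity
          linarith [hcmem.1]
        · have hk : ((k:ℕ):ℝ) + 1 ≤ (n:ℝ) := by exact_mod_cast k.2
          linarith [hcmem.2]
      have hpsi : psi n ((((equivIco (1:ℝ) a u : ℝ) + ((k:ℕ):ℝ) : ℝ)) : AddCircle (n:ℝ)) = u := by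
        rw [psi_coe]
        have h1 : (((k:ℕ):ℝ)) = (((k:ℕ):ℤ) : ℝ) := by push_cast; ring
        rw [h1, coe_add_int, coe_equivIco_symm]
      refine Prod.ext hpsi ?_
      show sheet hn a ((((equivIco (1:ℝ) a u : ℝ) + ((k:ℕ):ℝ) : ℝ)) : AddCircle (n:ℝ)) = k
      have hrep : ((equivIco (n:ℝ) a ((((equivIco (1:ℝ) a u : ℝ) + ((k:ℕ):ℝ) : ℝ))
          : AddCircle (n:ℝ)) : ℝ)) = (equivIco (1:ℝ) a u : ℝ) + ((k:ℕ):ℝ) :=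
        equivIco_coe_of_mem hck
      apply Fin.ext
      simp only [sheet, hrep]
      have hfl : ⌊(equivIco (1:ℝ) a u : ℝ) + ((k:ℕ):ℝ) - a⌋ = ((k : ℕ) : ℤ) := by
        rw [Int.floor_eq_iff]
        constructor
        · push_cast; linarith [hcmem.1]
        · push_cast; linarith [hcmem.2]
      rw [hfl]
      simp
    open_source := (isOpen_compl_singleton.preimage (continuous_psi n))
    open_target := isOpen_compl_singleton.prod isOpen_univ
    continuousOn_toFun := by
      haveI := fact_pos (hn := hn)
      apply ContinuousOn.prodMk ((continuous_psi n).continuousOn)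
      intro z hz
      apply ContinuousAt.continuousWithinAt
      replace hz : psi n z ≠ ((a:ℝ) : AddCircle (1:ℝ)) := hz
      have hzne : z ≠ (((a:ℝ)) : AddCircle (n:ℝ)) := by
        intro hzz
        exact hz (by rw [hzz, psi_coe])
      have hv : ContinuousAt (fun w : AddCircle (n:ℝ) => (equivIco (n:ℝ) a w : ℝ)) z :=
        continuousAt_subtype_val.comp (continuousAt_equivIco (n:ℝ) a hzne)
      have hsmem : (equivIco (n:ℝ) a z : ℝ) ∈ Ico a (a + (n:ℝ)) := (equivIco (n:ℝ) a z).2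
      have hlb : ((⌊(equivIco (n:ℝ) a z : ℝ) - a⌋:ℤ):ℝ) ≤ (equivIco (n:ℝ) a z : ℝ) - a :=
        Int.floor_le _
      have hne : ((⌊(equivIco (n:ℝ) a z : ℝ) - a⌋:ℤ):ℝ) ≠ (equivIco (n:ℝ) a z : ℝ) - a := by
        intro hEq
        apply hz
        have h1 : (equivIco (n:ℝ) a z : ℝ) = a + ((⌊(equivIco (n:ℝ) a z : ℝ) - a⌋:ℤ):ℝ) := by
          linarith
        rw [psi_rep hn a z, h1]
        have : ((a + ((⌊(equivIco (n:ℝ) a z : ℝ) - a⌋:ℤ):ℝ) : ℝ) : AddCircle (1:ℝ))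
            = ((a:ℝ) : AddCircle (1:ℝ)) := coe_add_int a _
        exact this
      have hlt : ((⌊(equivIco (n:ℝ) a z : ℝ) - a⌋:ℤ):ℝ) < (equivIco (n:ℝ) a z : ℝ) - a :=
        lt_of_le_of_ne hlb hne
      have hub : (equivIco (n:ℝ) a z : ℝ) - a < ((⌊(equivIco (n:ℝ) a z : ℝ) - a⌋:ℤ):ℝ) + 1 :=
        Int.lt_floor_add_one _
      have hnb : ∀ᶠ w in nhds z, (equivIco (n:ℝ) a w : ℝ)
          ∈ Ioo (a + ((⌊(equivIco (n:ℝ) a z : ℝ) - a⌋:ℤ):ℝ))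
            (a + ((⌊(equivIco (n:ℝ) a z : ℝ) - a⌋:ℤ):ℝ) + 1) :=
        hv (isOpen_Ioo.mem_nhds ⟨by linarith, by linarith⟩)
      have hev : ∀ᶠ w in nhds z, sheet hn a w = sheet hn a z := by
        filter_upwards [hnb] with w hw
        have hwk : ⌊(equivIco (n:ℝ) a w : ℝ) - a⌋ = ⌊(equivIco (n:ℝ) a z : ℝ) - a⌋ := by
          rw [Int.floor_eq_iff]
          exact ⟨by linarith [hw.1], by linarith [hw.2]⟩
        apply Fin.ext
        simp only [sheet, hwk]
      exact Filter.EventuallyEq.continuousAt hev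
    continuousOn_invFun := by
      haveI := fact_pos (hn := hn)
      rintro ⟨u, k⟩ ⟨hu, -⟩
      apply ContinuousAt.continuousWithinAt
      replace hu : u ≠ ((a:ℝ) : AddCircle (1:ℝ)) := hu
      have h1 : ContinuousAt (fun q : AddCircle (1:ℝ) × Fin n => (equivIco (1:ℝ) a q.1 : ℝ))
          (u, k) :=
        ContinuousAt.comp (g := fun w : AddCircle (1:ℝ) => (equivIco (1:ℝ) a w : ℝ))
          (continuousAt_subtype_val.comp (continuousAt_equivIco (1:ℝ) a hu))
          continuousAt_fst
      have h2 : Continuous (fun q : AddCircle (1:ℝ) × Fin n => ((q.2 : ℕ) : ℝ)) :=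
        (continuous_of_discreteTopology (f := fun k : Fin n => ((k:ℕ):ℝ))).comp continuous_snd
      exact ((AddCircle.continuous_mk' (n:ℝ)).continuousAt).comp (h1.add h2.continuousAt)
    baseSet := {((a:ℝ) : AddCircle (1:ℝ))}ᶜ
    open_baseSet := isOpen_compl_singleton
    source_eq := rfl
    target_eq := rfl
    proj_toFun := fun z _ => rfl }

lemma mem_baseSet_psiTriv (hn : 0 < n) (b : AddCircle (1:ℝ)) :
    ∃ a : ℝ, b ∈ (psiTriv hn a).baseSet := by
  obtain ⟨t, -, rfl⟩ := AddCircle.eq_coe_Ico b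
  refine ⟨t + 1/2, ?_⟩
  show ((t:ℝ) : AddCircle (1:ℝ)) ≠ ((t + 1/2 : ℝ) : AddCircle (1:ℝ))
  intro hEq
  obtain ⟨m, hm⟩ := QuotientAddGroup.leftRel_apply.mp (Quotient.exact' hEq)
  have hm' : (m:ℝ) = 1/2 := by
    have : (m:ℝ) * 1 = -t + (t + 1/2) := by simpa [zsmul_eq_mul] using hm
    linarith
  have h2 : ((2 * m : ℤ) : ℝ) = ((1:ℤ):ℝ) := by push_cast; linarith
  have := Int.cast_injective h2
  omega

lemma isCoveringMap_psi (hn : 0 < n) : IsCoveringMap (psi n) := by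
  intro b
  obtain ⟨a, hab⟩ := mem_baseSet_psiTriv hn b
  exact (IsEvenlyCovered.of_trivialization (t := psiTriv hn a) hab).to_isEvenlyCovered_preimage

lemma card_psi_fiber (hn : 0 < n) (b : AddCircle (1:ℝ)) :
    Nat.card (psi n ⁻¹' {b}) = n := by
  obtain ⟨a, hab⟩ := mem_baseSet_psiTriv hn b
  rw [Nat.card_congr ((psiTriv hn a).preimageSingletonHomeomorph hab).toEquiv,
    Nat.card_eq_fintype_card, Fintype.card_fin]

lemma IsCoveringMap.comp_homeomorph {E E' X : Type*} [TopologicalSpace E] [TopologicalSpace E']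
    [TopologicalSpace X] {f : E' → X} (hf : IsCoveringMap f) (e : E ≃ₜ E') :
    IsCoveringMap (f ∘ e) := by
  intro b
  obtain ⟨hd, T, hT⟩ := hf b
  exact ((hf b).comp_homeomorph e).to_isEvenlyCovered_preimage



section Pows

lemma mul_apply (a b : F ≃ₜ F) (y : F) : (a * b) y = a (b y) := rfl

lemma hpow_apply (h : F ≃ₜ F) (k : ℕ) (y : F) : (h ^ k) y = (⇑h)^[k] y := by
  induction k generalizing y with
  | zero => rfl
  | succ k ih =>
    rw [pow_succ, mul_apply, Function.iterate_succ_apply, ih]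

lemma hzpow_natCast (h : F ≃ₜ F) (k : ℕ) (y : F) : (h ^ (k:ℤ)) y = (⇑h)^[k] y := by
  rw [zpow_natCast, hpow_apply]

lemma zpow_apply_add (h : F ≃ₜ F) (a b : ℤ) (y : F) :
    (h ^ (a + b)) y = (h ^ a) ((h ^ b) y) := by
  rw [zpow_add, mul_apply]

lemma inv_fix (g : F ≃ₜ F) {y : F} (hg : g y = y) : g⁻¹ y = y := by
  show g.symm y = y
  conv_lhs => rw [← hg]
  exact g.symm_apply_apply y

lemma fix_zpow (h : F ≃ₜ F) {x : F} {n : ℕ} (hper : (⇑h)^[n] x = x) (m : ℤ) :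
    (h ^ ((n:ℤ) * m)) x = x := by
  have hfixn : (h ^ (n:ℤ)) x = x := by rw [hzpow_natCast, hper]
  have hfixneg : (h ^ (-(n:ℤ))) x = x := by
    rw [zpow_neg]
    exact inv_fix _ hfixn
  induction m using Int.induction_on with
  | zero => simp only [mul_zero, zpow_zero]; rfl
  | succ m ih =>
    have heq : (n:ℤ) * (m + 1) = (n:ℤ) * m + (n:ℤ) := by ring
    rw [heq, zpow_apply_add, hfixn, ih]
  | pred m ih =>
    have heq : (n:ℤ) * (-m - 1) = (n:ℤ) * (-m) + (-(n:ℤ)) := by ring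
    rw [heq, zpow_apply_add, hfixneg, ih]

lemma zpow_orbit (h : F ≃ₜ F) {x : F} {n : ℕ} (hn : 0 < n) (hper : (⇑h)^[n] x = x) (m : ℤ) :
    ∃ j : ℕ, j < n ∧ (h ^ m) x = (⇑h)^[j] x := by
  have h1 : 0 ≤ m % (n:ℤ) := Int.emod_nonneg m (by exact_mod_cast hn.ne')
  have h2 : m % (n:ℤ) < (n:ℤ) := Int.emod_lt_of_pos m (by exact_mod_cast hn)
  refine ⟨(m % (n:ℤ)).toNat, by omega, ?_⟩
  have e : (h ^ (m % (n:ℤ))) x = (⇑h)^[(m % (n:ℤ)).toNat] x := by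
    conv_lhs => rw [← Int.toNat_of_nonneg h1]
    exact hzpow_natCast h _ x
  conv_lhs => rw [← Int.emod_add_mul_ediv m (n:ℤ)]
  rw [zpow_apply_add, fix_zpow h hper (m / (n:ℤ)), e]

lemma zpow_fix_dvd (h : F ≃ₜ F) {x : F} {n : ℕ} (hn : 0 < n) (hper : (⇑h)^[n] x = x)
    (hleast : ∀ i j : ℕ, i < n → j < n → (⇑h)^[i] x = (⇑h)^[j] x → i = j)
    (m : ℤ) (hfix : (h ^ m) x = x) : (n:ℤ) ∣ m := by
  have h1 : 0 ≤ m % (n:ℤ) := Int.emod_nonneg m (by exact_mod_cast hn.ne')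
  have h2 : m % (n:ℤ) < (n:ℤ) := Int.emod_lt_of_pos m (by exact_mod_cast hn)
  have hmod : (h ^ (m % (n:ℤ))) x = x := by
    have hd : (h ^ ((n:ℤ) * (m / (n:ℤ)))) x = x := fix_zpow h hper _
    have : (h ^ (m % (n:ℤ) + (n:ℤ) * (m / (n:ℤ)))) x = x := by
      rw [Int.emod_add_mul_ediv m (n:ℤ)]; exact hfix
    rwa [zpow_apply_add, hd] at this
  have hj : (⇑h)^[(m % (n:ℤ)).toNat] x = (⇑h)^[0] x := by
    rw [← hzpow_natCast, Int.toNat_of_nonneg h1, hmod]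
    rfl
  have := hleast ((m % (n:ℤ)).toNat) 0 (by omega) hn hj
  have hzero : m % (n:ℤ) = 0 := by omega
  exact Int.dvd_of_emod_eq_zero hzero

end Pows

section Torus

lemma continuous_torusAct (h : F ≃ₜ F) (m : ℤ) : Continuous (torusAct h m) :=
  ((h ^ m).continuous.comp continuous_fst).prodMk (continuous_snd.add continuous_const)

lemma isOpenMap_torusMk (h : F ≃ₜ F) : IsOpenMap (Quotient.mk (torusSetoid h)) := by
  intro U hU
  have hset : Quotient.mk (torusSetoid h) ⁻¹' (Quotient.mk (torusSetoid h) '' U)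
      = ⋃ m : ℤ, torusAct h (-m) ⁻¹' U := by
    ext z
    simp only [mem_preimage, mem_image, mem_iUnion]
    constructor
    · rintro ⟨u, hu, hq⟩
      obtain ⟨m, hm⟩ := Quotient.exact hq
      refine ⟨m, ?_⟩
      show torusAct h (-m) z ∈ U
      rw [← hm, ← torusAct_add, neg_add_cancel, torusAct_zero]
      exact hu
    · rintro ⟨m, hm⟩
      refine ⟨torusAct h (-m) z, hm, Quotient.sound ⟨m, ?_⟩⟩
      rw [← torusAct_add, add_neg_cancel, torusAct_zero]
  show IsOpen (Quotient.mk (torusSetoid h) '' U)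
  rw [isOpen_coinduced (f := Quotient.mk (torusSetoid h)), hset]
  exact isOpen_iUnion fun m => hU.preimage (continuous_torusAct h (-m))

/-- The parametrization of the orbit piece of the mapping torus by `ℝ/nℤ`. -/
noncomputable def phi (h : F ≃ₜ F) (x : F) (n : ℕ) (hper : (⇑h)^[n] x = x) :
    AddCircle (n:ℝ) → MappingTorus h := fun z =>
  Quotient.liftOn' z (fun t => Quotient.mk (torusSetoid h) (x, t)) (by
    intro s t hst
    obtain ⟨m, hm⟩ := QuotientAddGroup.leftRel_apply.mp hst
    have hm' : (m:ℝ) * n = -s + t := by simpa [zsmul_eq_mul] using hm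
    apply Quotient.sound
    refine ⟨(n:ℤ) * m, ?_⟩
    show ((h ^ ((n:ℤ) * m)) x, s + (((n:ℤ) * m : ℤ) : ℝ)) = (x, t)
    rw [fix_zpow h hper m]
    exact Prod.ext rfl (by push_cast; linarith))

lemma phi_coe (h : F ≃ₜ F) (x : F) (n : ℕ) (hper : (⇑h)^[n] x = x) (t : ℝ) :
    phi h x n hper ((t : ℝ) : AddCircle (n:ℝ)) = Quotient.mk (torusSetoid h) (x, t) := rfl

lemma continuous_phi (h : F ≃ₜ F) (x : F) (n : ℕ) (hper : (⇑h)^[n] x = x) :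
    Continuous (phi h x n hper) := by
  apply Continuous.quotient_liftOn'
  exact continuous_coinduced_rng.comp (continuous_const.prodMk continuous_id)

/-- The orbit piece of the mapping torus, as in the statement. -/
def orbitSet (h : F ≃ₜ F) (x : F) (n : ℕ) : Set (MappingTorus h) :=
  Quotient.mk (torusSetoid h) '' {p : F × ℝ | ∃ i : ℕ, i < n ∧ (⇑h)^[i] x = p.1}

/-- `phi` with codomain the orbit subspace. -/
noncomputable def phiS (h : F ≃ₜ F) (x : F) (n : ℕ) (hn : 0 < n) (hper : (⇑h)^[n] x = x) :
    AddCircle (n:ℝ) → {z : MappingTorus h // z ∈ orbitSet h x n} := fun z =>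
  ⟨phi h x n hper z, by
    obtain ⟨t, rfl⟩ := Quotient.exists_rep z
    exact ⟨(x, t), ⟨0, hn, rfl⟩, rfl⟩⟩

lemma continuous_phiS (h : F ≃ₜ F) (x : F) (n : ℕ) (hn : 0 < n) (hper : (⇑h)^[n] x = x) :
    Continuous (phiS h x n hn hper) :=
  (continuous_phi h x n hper).subtype_mk _

lemma phiS_surjective (h : F ≃ₜ F) (x : F) (n : ℕ) (hn : 0 < n) (hper : (⇑h)^[n] x = x) :
    Surjective (phiS h x n hn hper) := by
  rintro ⟨z, hz⟩
  obtain ⟨⟨y, t⟩, ⟨i, hin, hiy⟩, rfl⟩ := hz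
  refine ⟨((t - i : ℝ) : AddCircle (n:ℝ)), ?_⟩
  apply Subtype.ext
  show Quotient.mk (torusSetoid h) (x, t - i) = Quotient.mk (torusSetoid h) (y, t)
  apply Quotient.sound
  refine ⟨(i:ℤ), ?_⟩
  show ((h ^ (i:ℤ)) x, t - i + ((i:ℤ):ℝ)) = (y, t)
  rw [hzpow_natCast, hiy]
  exact Prod.ext rfl (by push_cast; ring)

lemma phiS_injective (h : F ≃ₜ F) (x : F) (n : ℕ) (hn : 0 < n) (hper : (⇑h)^[n] x = x)
    (hleast : ∀ i j : ℕ, i < n → j < n → (⇑h)^[i] x = (⇑h)^[j] x → i = j) :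
    Injective (phiS h x n hn hper) := by
  intro z w hzw
  obtain ⟨s, rfl⟩ := Quotient.exists_rep z
  obtain ⟨t, rfl⟩ := Quotient.exists_rep w
  have h1 : Quotient.mk (torusSetoid h) (x, s) = Quotient.mk (torusSetoid h) (x, t) :=
    congrArg Subtype.val hzw
  obtain ⟨m, hm⟩ := Quotient.exact h1
  have hm1 : (h ^ m) x = x := congrArg Prod.fst hm
  have hm2 : s + (m:ℝ) = t := congrArg Prod.snd hm
  obtain ⟨c, rfl⟩ := zpow_fix_dvd h hn hper hleast m hm1
  apply Quotient.sound'
  rw [QuotientAddGroup.leftRel_apply]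
  refine AddSubgroup.mem_zmultiples_iff.mpr ⟨c, ?_⟩
  rw [zsmul_eq_mul]
  push_cast at hm2 ⊢
  linarith

lemma isOpenMap_phiS [T2Space F] (h : F ≃ₜ F) (x : F) (n : ℕ) (hn : 0 < n)
    (hper : (⇑h)^[n] x = x)
    (hleast : ∀ i j : ℕ, i < n → j < n → (⇑h)^[i] x = (⇑h)^[j] x → i = j) :
    IsOpenMap (phiS h x n hn hper) := by
  intro U hU
  have hW : IsOpen ((fun t : ℝ => ((t:ℝ) : AddCircle (n:ℝ))) ⁻¹' U) :=
    hU.preimage (AddCircle.continuous_mk' _)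
  have hTfin : ({y : F | ∃ i : ℕ, 0 < i ∧ i < n ∧ (⇑h)^[i] x = y}).Finite := by
    apply Set.Finite.subset (Set.finite_range (fun i : Fin n => (⇑h)^[(i:ℕ)] x))
    rintro y ⟨i, -, hin, rfl⟩
    exact ⟨⟨i, hin⟩, rfl⟩
  have hTclosed : IsClosed {y : F | ∃ i : ℕ, 0 < i ∧ i < n ∧ (⇑h)^[i] x = y} :=
    hTfin.isClosed
  have hxT : x ∉ {y : F | ∃ i : ℕ, 0 < i ∧ i < n ∧ (⇑h)^[i] x = y} := by
    rintro ⟨i, hi0, hin, hix⟩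
    have h0 : (⇑h)^[i] x = (⇑h)^[0] x := hix
    have := hleast i 0 hin hn h0
    omega
  have hB : IsOpen ({y : F | ∃ i : ℕ, 0 < i ∧ i < n ∧ (⇑h)^[i] x = y}ᶜ
      ×ˢ ((fun t : ℝ => ((t:ℝ) : AddCircle (n:ℝ))) ⁻¹' U)) :=
    hTclosed.isOpen_compl.prod hW
  have hV : IsOpen (Quotient.mk (torusSetoid h) ''
      ({y : F | ∃ i : ℕ, 0 < i ∧ i < n ∧ (⇑h)^[i] x = y}ᶜ
        ×ˢ ((fun t : ℝ => ((t:ℝ) : AddCircle (n:ℝ))) ⁻¹' U))) :=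
    isOpenMap_torusMk h _ hB
  have hkey : phiS h x n hn hper '' U = Subtype.val ⁻¹' (Quotient.mk (torusSetoid h) ''
      ({y : F | ∃ i : ℕ, 0 < i ∧ i < n ∧ (⇑h)^[i] x = y}ᶜ
        ×ˢ ((fun t : ℝ => ((t:ℝ) : AddCircle (n:ℝ))) ⁻¹' U))) := by
    ext z
    simp only [mem_image, mem_preimage]
    constructor
    · rintro ⟨w, hwU, rfl⟩
      obtain ⟨t, rfl⟩ := Quotient.exists_rep w
      exact ⟨(x, t), ⟨hxT, hwU⟩, rfl⟩
    · rintro ⟨⟨y, s⟩, ⟨hyc, hsW⟩, hq⟩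
      obtain ⟨⟨y', t⟩, ⟨i, hin, hiy⟩, hz1⟩ := z.2
      obtain ⟨m, hm⟩ := Quotient.exact (hq.trans hz1.symm)
      have hm1 : (h ^ m) y = y' := congrArg Prod.fst hm
      have hy : y = (h ^ (-m + (i:ℤ))) x := by
        have e1 : (h ^ (-m)) ((h ^ m) y) = y := by
          rw [← zpow_apply_add, neg_add_cancel, zpow_zero]; rfl
        rw [zpow_apply_add, hzpow_natCast, hiy, ← hm1, e1]
      obtain ⟨j, hjn, hj⟩ := zpow_orbit h hn hper (-m + (i:ℤ))
      have hyj : y = (⇑h)^[j] x := by rw [hy, hj]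
      have hyx : y = x := by
        rcases Nat.eq_zero_or_pos j with hj0 | hj0
        · rw [hyj, hj0]; rfl
        · exact absurd ⟨j, hj0, hjn, hyj.symm⟩ hyc
      refine ⟨((s : ℝ) : AddCircle (n:ℝ)), hsW, ?_⟩
      apply Subtype.ext
      show Quotient.mk (torusSetoid h) (x, s) = z.1
      rw [← hq, hyx]
  rw [hkey]
  exact hV.preimage continuous_subtype_val

end Torus


end MTAux

/-- Let `F` be Hausdorff, `h : F ≃ₜ F` a homeomorphism and `x` a periodic
point of least period `n ≥ 1`.  Let `S ⊆ T_h` be the image in the mapping torus of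
`{x, h x, …, h^[n-1] x} × ℝ`.  Then the restriction of the mapping-torus projection to `S`
is a covering map of the circle each of whose fibers has exactly `n` elements. -/
theorem orbit_gives_n_fold_covering [T2Space F] (h : F ≃ₜ F) (x : F) (n : ℕ)
    (hn : 1 ≤ n) (hper : (⇑h)^[n] x = x)
    (hleast : ∀ i j : ℕ, i < n → j < n → (⇑h)^[i] x = (⇑h)^[j] x → i = j) :
    IsCoveringMap
      (fun z : {z : MappingTorus h //
          z ∈ Quotient.mk (torusSetoid h) ''
            {p : F × ℝ | ∃ i : ℕ, i < n ∧ (⇑h)^[i] x = p.1}} =>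
        torusProj h z.1) ∧
    ∀ b : AddCircle (1 : ℝ),
      Nat.card
        ((fun z : {z : MappingTorus h //
            z ∈ Quotient.mk (torusSetoid h) ''
              {p : F × ℝ | ∃ i : ℕ, i < n ∧ (⇑h)^[i] x = p.1}} =>
          torusProj h z.1) ⁻¹' {b}) = n := by
  classical
  have hn0 : 0 < n := hn
  let PhiS : AddCircle (n:ℝ) ≃ₜ {z : MappingTorus h // z ∈ MTAux.orbitSet h x n} :=
    Equiv.toHomeomorphOfContinuousOpen
      (Equiv.ofBijective (MTAux.phiS h x n hn0 hper)
        ⟨MTAux.phiS_injective h x n hn0 hper hleast, MTAux.phiS_surjective h x n hn0 hper⟩)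
      (MTAux.continuous_phiS h x n hn0 hper)
      (MTAux.isOpenMap_phiS h x n hn0 hper hleast)
  have heq : (fun z : {z : MappingTorus h //
        z ∈ Quotient.mk (torusSetoid h) ''
          {p : F × ℝ | ∃ i : ℕ, i < n ∧ (⇑h)^[i] x = p.1}} =>
      torusProj h z.1) = MTAux.psi n ∘ ⇑PhiS.symm := by
    funext z
    obtain ⟨w, rfl⟩ := PhiS.surjective z
    show torusProj h (PhiS w).1 = MTAux.psi n (PhiS.symm (PhiS w))
    rw [Homeomorph.symm_apply_apply]
    obtain ⟨t, rfl⟩ := Quotient.exists_rep w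
    rfl
  constructor
  · rw [heq]
    exact MTAux.IsCoveringMap.comp_homeomorph (MTAux.isCoveringMap_psi hn0) PhiS.symm
  · intro b
    rw [heq]
    have h1 : (MTAux.psi n ∘ ⇑PhiS.symm) ⁻¹' {b} = ⇑PhiS.symm ⁻¹' (MTAux.psi n ⁻¹' {b}) := rfl
    change Nat.card ↑(⇑PhiS.symm ⁻¹' (MTAux.psi n ⁻¹' {b})) = n
    rw [Homeomorph.preimage_symm, Nat.card_image_of_injective PhiS.injective]
    exact MTAux.card_psi_fiber hn0 b
end
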